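/- arXiv:1306.0105 — 7 statements merged into one kernel-verified Lean document; each statement's English description precedes it below -/
import Mathlib

section
/- If (a, b) is an equilibrium point of the system a' = b/2 − (3C/8)(a² + b²)b − J/2 + (B/2)sin γ, b' = −a/2 + (3C/8)(a² + b²)a − A/2 − (B/2)cos γ, and J − B sin γ ≠ 0, then b satisfies the cubic equation b − (3C/4) · (((A + B cos γ)² + (J − B sin γ)²)/(J − B sin γ)²) · b³ − J + B sin γ = 0. -/
/-- If `(a, b)` is an equilibrium point of the slow-flow system and `J − B sin γ ≠ 0`,
then `b` satisfies the cubic equation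
`b − (3C/4)·(((A + B cos γ)² + (J − B sin γ)²)/(J − B sin γ)²)·b³ − J + B sin γ = 0`. -/
theorem equilibrium_cubic (A B C J γ a b : ℝ)
    (ha : b / 2 - 3 * C / 8 * (a ^ 2 + b ^ 2) * b - J / 2 + B / 2 * Real.sin γ = 0)
    (hb : -a / 2 + 3 * C / 8 * (a ^ 2 + b ^ 2) * a - A / 2 - B / 2 * Real.cos γ = 0)
    (hne : J - B * Real.sin γ ≠ 0) :
    b - 3 * C / 4 *
        (((A + B * Real.cos γ) ^ 2 + (J - B * Real.sin γ) ^ 2) /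
          (J - B * Real.sin γ) ^ 2) * b ^ 3 - J + B * Real.sin γ = 0 := by
  set s := Real.sin γ
  set c := Real.cos γ
  have h1 : (3 * C / 4 * (a ^ 2 + b ^ 2) - 1) * b = -(J - B * s) := by
    linear_combination (-2 : ℝ) * ha
  have h2 : (3 * C / 4 * (a ^ 2 + b ^ 2) - 1) * a = A + B * c := by
    linear_combination (2 : ℝ) * hb
  have h3 : a * (J - B * s) = -(b * (A + B * c)) := by
    linear_combination a * h1 - b * h2
  have hQ2 : (J - B * s) ^ 2 ≠ 0 := pow_ne_zero _ hne
  have key2 : b * (J - B * s) ^ 2 - 3 * C / 4 * ((A + B * c) ^ 2 + (J - B * s) ^ 2) * b ^ 3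
      - (J - B * s) * (J - B * s) ^ 2 = 0 := by
    linear_combination (-(J - B * s) ^ 2) * h1 +
      (3 * C / 4 * b * (a * (J - B * s) - b * (A + B * c))) * h3
  have hrw : b - 3 * C / 4 *
        (((A + B * c) ^ 2 + (J - B * s) ^ 2) / (J - B * s) ^ 2) * b ^ 3 - J + B * s =
      (b * (J - B * s) ^ 2 - 3 * C / 4 * ((A + B * c) ^ 2 + (J - B * s) ^ 2) * b ^ 3
        - (J - B * s) * (J - B * s) ^ 2) / (J - B * s) ^ 2 := by
    field_simp
    ring
  rw [hrw, key2, zero_div]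
end

section
/- Assume C > 0, J − B sin γ ≠ 0, and 0 < D < 16/(81C), where D = (A + B cos γ)² + (J − B sin γ)². Then the cubic equation b − (3C/4) · (D/(J − B sin γ)²) · b³ − J + B sin γ = 0 has three distinct real roots. -/
lemma cubic_aux (k s : ℝ) (hk : 0 < k) (h4 : 27 * k * s ^ 2 < 4) :
    ∃ b₁ b₂ b₃ : ℝ, b₁ ≠ b₂ ∧ b₁ ≠ b₃ ∧ b₂ ≠ b₃ ∧
      b₁ - k * b₁ ^ 3 - s = 0 ∧ b₂ - k * b₂ ^ 3 - s = 0 ∧ b₃ - k * b₃ ^ 3 - s = 0 := by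
  set f : ℝ → ℝ := fun b => b - k * b ^ 3 - s with hf
  have hcont : Continuous f := by fun_prop
  set m := Real.sqrt (1 / (3 * k)) with hm
  have hm0 : 0 < m := Real.sqrt_pos.2 (by positivity)
  have hm2 : m ^ 2 = 1 / (3 * k) := Real.sq_sqrt (by positivity)
  have h3 : m ^ 2 * (3 * k) = 1 := by
    field_simp at hm2; linarith
  have habs : |s| < 2 * m / 3 := by
    have hsq : s ^ 2 < (2 * m / 3) ^ 2 := by
      have : (2 * m / 3) ^ 2 = 4 / (27 * k) := by
        field_simp
        nlinarith [h3]
      rw [this]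
      rw [lt_div_iff₀ (by positivity)]
      nlinarith [h4]
    nlinarith [sq_abs s, abs_nonneg s, hm0]
  obtain ⟨T, hT⟩ : ∃ T : ℝ, T = 2 * m + |s| / 3 := ⟨_, rfl⟩
  have e1 : k * m ^ 3 = m / 3 := by nlinarith [h3, hm0]
  have e2 : k * m ^ 2 * |s| = |s| / 3 := by nlinarith [h3, abs_nonneg s]
  have hkT : k * T ^ 3 - T > |s| := by
    have h5 : 0 ≤ k * m * |s| ^ 2 :=
      mul_nonneg (mul_nonneg hk.le hm0.le) (sq_nonneg _)
    have h6 : 0 ≤ k * |s| ^ 3 :=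
      mul_nonneg hk.le (pow_nonneg (abs_nonneg s) 3)
    rw [hT]
    nlinarith [e1, e2, h5, h6, hm0, abs_nonneg s]
  have hfm : f m = 2 * m / 3 - s := by
    show m - k * m ^ 3 - s = 2 * m / 3 - s
    linarith [e1]
  have hfnm : f (-m) = -(2 * m / 3) - s := by
    show -m - k * (-m) ^ 3 - s = -(2 * m / 3) - s
    have : (-m) ^ 3 = -(m ^ 3) := by ring
    rw [this]; linarith [e1]
  have hsle : s ≤ |s| := le_abs_self s
  have hsge : -|s| ≤ s := neg_abs_le s
  have hfm_pos : 0 < f m := by rw [hfm]; linarith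
  have hfnm_neg : f (-m) < 0 := by rw [hfnm]; linarith
  have hfT_neg : f T < 0 := by
    show T - k * T ^ 3 - s < 0
    linarith
  have hfnT_pos : 0 < f (-T) := by
    show (0:ℝ) < -T - k * (-T) ^ 3 - s
    have : (-T) ^ 3 = -(T ^ 3) := by ring
    rw [this]; linarith
  have hmT : m < T := by
    have h0 : 0 ≤ |s| := abs_nonneg s
    rw [hT]; linarith
  -- root 1 in [-T, -m]
  obtain ⟨b₁, hb₁mem, hb₁⟩ :=
    intermediate_value_Icc' (by linarith : -T ≤ -m) (hcont.continuousOn (s := Set.Icc (-T) (-m)))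
      (Set.mem_Icc.2 ⟨hfnm_neg.le, hfnT_pos.le⟩)
  -- root 2 in [-m, m]
  obtain ⟨b₂, hb₂mem, hb₂⟩ :=
    intermediate_value_Icc (by linarith : -m ≤ m) (hcont.continuousOn (s := Set.Icc (-m) m))
      (Set.mem_Icc.2 ⟨hfnm_neg.le, hfm_pos.le⟩)
  -- root 3 in [m, T]
  obtain ⟨b₃, hb₃mem, hb₃⟩ :=
    intermediate_value_Icc' (hmT.le) (hcont.continuousOn (s := Set.Icc m T))
      (Set.mem_Icc.2 ⟨hfT_neg.le, hfm_pos.le⟩)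
  obtain ⟨hb₁l, hb₁r⟩ := Set.mem_Icc.1 hb₁mem
  obtain ⟨hb₂l, hb₂r⟩ := Set.mem_Icc.1 hb₂mem
  obtain ⟨hb₃l, hb₃r⟩ := Set.mem_Icc.1 hb₃mem
  have hb₁ne : b₁ ≠ -m := fun h => by rw [h] at hb₁; exact hfnm_neg.ne hb₁
  have hb₂ne : b₂ ≠ -m := fun h => by rw [h] at hb₂; exact hfnm_neg.ne hb₂
  have hb₂ne' : b₂ ≠ m := fun h => by rw [h] at hb₂; exact hfm_pos.ne' hb₂
  have hb₃ne : b₃ ≠ m := fun h => by rw [h] at hb₃; exact hfm_pos.ne' hb₃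
  have h12 : b₁ < b₂ := lt_of_lt_of_le (lt_of_le_of_ne hb₁r hb₁ne) (lt_of_le_of_ne hb₂l (Ne.symm hb₂ne)).le
  have h23 : b₂ < b₃ := lt_of_lt_of_le (lt_of_le_of_ne hb₂r hb₂ne') (lt_of_le_of_ne hb₃l (Ne.symm hb₃ne)).le
  exact ⟨b₁, b₂, b₃, h12.ne, (h12.trans h23).ne, h23.ne, hb₁, hb₂, hb₃⟩

/-- Assume `C > 0`, `J − B sin γ ≠ 0`, and `0 < D < 16/(81C)`, where
`D = (A + B cos γ)² + (J − B sin γ)²`. Then the cubic equation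
`b − (3C/4)·(D/(J − B sin γ)²)·b³ − J + B sin γ = 0` has three distinct real roots. -/
theorem cubic_three_distinct_roots (A B C J γ : ℝ) (hC : 0 < C)
    (hne : J - B * Real.sin γ ≠ 0)
    (hD0 : 0 < (A + B * Real.cos γ) ^ 2 + (J - B * Real.sin γ) ^ 2)
    (hD : (A + B * Real.cos γ) ^ 2 + (J - B * Real.sin γ) ^ 2 < 16 / (81 * C)) :
    ∃ b₁ b₂ b₃ : ℝ, b₁ ≠ b₂ ∧ b₁ ≠ b₃ ∧ b₂ ≠ b₃ ∧
      (b₁ - 3 * C / 4 *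
          (((A + B * Real.cos γ) ^ 2 + (J - B * Real.sin γ) ^ 2) /
            (J - B * Real.sin γ) ^ 2) * b₁ ^ 3 - J + B * Real.sin γ = 0) ∧
      (b₂ - 3 * C / 4 *
          (((A + B * Real.cos γ) ^ 2 + (J - B * Real.sin γ) ^ 2) /
            (J - B * Real.sin γ) ^ 2) * b₂ ^ 3 - J + B * Real.sin γ = 0) ∧
      (b₃ - 3 * C / 4 *
          (((A + B * Real.cos γ) ^ 2 + (J - B * Real.sin γ) ^ 2) /
            (J - B * Real.sin γ) ^ 2) * b₃ ^ 3 - J + B * Real.sin γ = 0) := by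
  set s := J - B * Real.sin γ with hs
  set D := (A + B * Real.cos γ) ^ 2 + s ^ 2 with hDdef
  set k := 3 * C / 4 * (D / s ^ 2) with hk
  clear_value s
  have hs2 : 0 < s ^ 2 := by positivity
  clear_value D
  clear_value k
  have hkpos : 0 < k := by
    rw [hk]; positivity
  have h4 : 27 * k * s ^ 2 < 4 := by
    have hD16 : 81 * C * D < 16 := by
      rw [lt_div_iff₀ (by positivity)] at hD
      nlinarith [hD]
    have : 27 * k * s ^ 2 = 81 * C * D / 4 := by
      rw [hk]; field_simp; ring
    rw [this]; linarith
  obtain ⟨b₁, b₂, b₃, h12, h13, h23, e1, e2, e3⟩ := cubic_aux k s hkpos h4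
  refine ⟨b₁, b₂, b₃, h12, h13, h23, ?_, ?_, ?_⟩ <;> [linarith [e1]; linarith [e2]; linarith [e3]]
end

section
/- Assume C > 0, J − B sin γ ≠ 0, and 0 < D < 16/(81C), where D = (A + B cos γ)² + (J − B sin γ)². Let ϖ = arccos(−9√(CD)/4) and for k ∈ {0,1,2} set a_k = −(4(A + B cos γ)/(3√(CD))) cos(ϖ/3 + 2kπ/3) and b_k = (4(J − B sin γ)/(3√(CD))) cos(ϖ/3 + 2kπ/3). Then each (a_k, b_k) is an equilibrium point of the system a' = b/2 − (3C/8)(a² + b²)b − J/2 + (B/2)sin γ, b' = −a/2 + (3C/8)(a² + b²)a − A/2 − (B/2)cos γ, i.e. both right-hand sides vanish at (a_k, b_k). -/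
lemma equilibrium_aux (C s c P Q a b : ℝ) (hC : C ≠ 0) (hs : s ≠ 0)
    (ha : a = -(4*P/(3*s))*c) (hb : b = 4*Q/(3*s)*c)
    (h1 : 4*c^3 - 3*c = -9*s/4) (h2 : s^2 = C*(P^2+Q^2)) :
    b/2 - 3*C/8*(a^2+b^2)*b - Q/2 = 0 ∧ -a/2 + 3*C/8*(a^2+b^2)*a - P/2 = 0 := by
  have hsum : a^2 + b^2 = 16*c^2/(9*C) := by
    rw [ha, hb]
    field_simp
    linear_combination (-144*c^2)*h2
  rw [hsum, ha, hb]
  constructor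
  · field_simp
    linear_combination (-96*Q)*h1
  · field_simp
    linear_combination (-96*P)*h1

/-- Assume `C > 0`, `J − B sin γ ≠ 0`, and `0 < D < 16/(81C)`, where
`D = (A + B cos γ)² + (J − B sin γ)²`. Let `ϖ = arccos(−9√(CD)/4)` and for
`k ∈ {0,1,2}` set `a_k = −(4(A + B cos γ)/(3√(CD))) cos(ϖ/3 + 2kπ/3)`,
`b_k = (4(J − B sin γ)/(3√(CD))) cos(ϖ/3 + 2kπ/3)`. Then each `(a_k, b_k)` is an
equilibrium point of the slow-flow system. -/
theorem equilibrium_points_formula (A B C J γ : ℝ) (hC : 0 < C)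
    (hne : J - B * Real.sin γ ≠ 0)
    (hD0 : 0 < (A + B * Real.cos γ) ^ 2 + (J - B * Real.sin γ) ^ 2)
    (hD : (A + B * Real.cos γ) ^ 2 + (J - B * Real.sin γ) ^ 2 < 16 / (81 * C)) :
    ∀ k : Fin 3,
      let D : ℝ := (A + B * Real.cos γ) ^ 2 + (J - B * Real.sin γ) ^ 2
      let ϖ : ℝ := Real.arccos (-9 * Real.sqrt (C * D) / 4)
      let a : ℝ := -(4 * (A + B * Real.cos γ) / (3 * Real.sqrt (C * D))) *
        Real.cos (ϖ / 3 + 2 * (k : ℝ) * Real.pi / 3)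
      let b : ℝ := 4 * (J - B * Real.sin γ) / (3 * Real.sqrt (C * D)) *
        Real.cos (ϖ / 3 + 2 * (k : ℝ) * Real.pi / 3)
      (b / 2 - 3 * C / 8 * (a ^ 2 + b ^ 2) * b - J / 2 + B / 2 * Real.sin γ = 0) ∧
      (-a / 2 + 3 * C / 8 * (a ^ 2 + b ^ 2) * a - A / 2 - B / 2 * Real.cos γ = 0) := by
  intro k
  set P : ℝ := A + B * Real.cos γ with hP
  set Q : ℝ := J - B * Real.sin γ with hQ
  intro D ϖ a b
  set s : ℝ := Real.sqrt (C * D) with hs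
  have hCD : 0 < C * D := mul_pos hC hD0
  have hs0 : 0 < s := Real.sqrt_pos.mpr hCD
  have hs2 : s ^ 2 = C * D := Real.sq_sqrt hCD.le
  have h16 : C * D < 16 / 81 := by
    have hDD : D = P ^ 2 + Q ^ 2 := rfl
    have h1 := mul_lt_mul_of_pos_left hD hC
    have h2 : C * (16 / (81 * C)) = 16 / 81 := by field_simp
    rw [hDD]; linarith [h1, h2.le, h2.ge]
  have hsq : s ^ 2 < 16 / 81 := by rw [hs2]; exact h16
  have hslt : s < 4 / 9 := by nlinarith [hsq, hs0, sq_nonneg (s - 4/9)]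
  set θ : ℝ := ϖ / 3 + 2 * (k : ℝ) * Real.pi / 3 with hθ
  set c : ℝ := Real.cos θ with hc
  have hcosϖ : Real.cos ϖ = -9 * s / 4 := by
    apply Real.cos_arccos <;> nlinarith [hs0, hslt]
  have h3θ : (3:ℝ) * θ = ϖ + (k : ℤ) * (2 * Real.pi) := by
    push_cast
    rw [hθ]; ring
  have hkey : 4 * c ^ 3 - 3 * c = -9 * s / 4 := by
    have := Real.cos_three_mul θ
    rw [h3θ, Real.cos_add_int_mul_two_pi, hcosϖ] at this
    linarith [this]
  have hs2' : s ^ 2 = C * (P ^ 2 + Q ^ 2) := hs2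
  have ha : a = -(4*P/(3*s))*c := rfl
  have hb : b = 4*Q/(3*s)*c := rfl
  obtain ⟨h1, h2⟩ := equilibrium_aux C s c P Q a b hC.ne' hs0.ne' ha hb hkey hs2'
  constructor
  · have : Q = J - B * Real.sin γ := hQ
    linarith [h1]
  · have : P = A + B * Real.cos γ := hP
    linarith [h2]
end

section
/- Let a, b : ℝ → ℝ be differentiable functions solving the system a'(t) = b(t)/2 − (3C/8)(a(t)² + b(t)²)b(t) − J/2 + (B/2)sin γ, b'(t) = −a(t)/2 + (3C/8)(a(t)² + b(t)²)a(t) − A/2 − (B/2)cos γ for all t. Then the function t ↦ h(a(t), b(t)), where h(a,b) = (a² + b²)/4 − (3C/32)(a² + b²)² + (b/2)(B sin γ − J) + (a/2)(A + B cos γ), is constant (its derivative is identically zero). -/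
/-- Along any differentiable solution of the slow-flow system, the Hamiltonian
`h(a,b) = (a² + b²)/4 − (3C/32)(a² + b²)² + (b/2)(B sin γ − J) + (a/2)(A + B cos γ)`
is conserved: the derivative of `t ↦ h(a(t), b(t))` is identically zero. -/
theorem hamiltonian_conserved (A B C J γ : ℝ) (a b : ℝ → ℝ)
    (ha : ∀ t, HasDerivAt a
      (b t / 2 - 3 * C / 8 * (a t ^ 2 + b t ^ 2) * b t - J / 2 + B / 2 * Real.sin γ) t)
    (hb : ∀ t, HasDerivAt b
      (-a t / 2 + 3 * C / 8 * (a t ^ 2 + b t ^ 2) * a t - A / 2 - B / 2 * Real.cos γ) t) :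
    ∀ t, HasDerivAt (fun s =>
        (a s ^ 2 + b s ^ 2) / 4 - 3 * C / 32 * (a s ^ 2 + b s ^ 2) ^ 2 +
          b s / 2 * (B * Real.sin γ - J) + a s / 2 * (A + B * Real.cos γ)) 0 t := by
  intro t
  have ha' := ha t
  have hb' := hb t
  have h := ((((((ha'.pow 2).add (hb'.pow 2)).div_const 4).sub
      ((((ha'.pow 2).add (hb'.pow 2)).pow 2).const_mul (3 * C / 32))).add
      ((hb'.div_const 2).mul_const (B * Real.sin γ - J))).add
      ((ha'.div_const 2).mul_const (A + B * Real.cos γ)))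
  convert h using 1
  · rfl
  · rfl
  · rfl
  · simp only [Pi.add_apply, Pi.pow_apply]
    ring
end

section
/- Let a, b : ℝ → ℝ solve the system a'(t) = b(t)/2 − (3C/8)(a(t)² + b(t)²)b(t) − J/2 + (B/2)sin γ, b'(t) = −a(t)/2 + (3C/8)(a(t)² + b(t)²)a(t) − A/2 − (B/2)cos γ, and set ρ(t) = (a(t)² + b(t)²)/2. Then for every t, (ρ'(t))² + ((1/2)((B sin γ − J) b(t) + a(t)(A + B cos γ)))² = (ρ(t)/2) · D, where D = (A + B cos γ)² + (J − B sin γ)². -/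
/-- Along a solution of the slow-flow system, with `ρ = (a² + b²)/2`, one has
`(ρ')² + ((1/2)((B sin γ − J) b + a (A + B cos γ)))² = (ρ/2) · D`, where
`D = (A + B cos γ)² + (J − B sin γ)²`. -/
theorem action_derivative_sq (A B C J γ : ℝ) (a b : ℝ → ℝ)
    (ha : ∀ t, HasDerivAt a
      (b t / 2 - 3 * C / 8 * (a t ^ 2 + b t ^ 2) * b t - J / 2 + B / 2 * Real.sin γ) t)
    (hb : ∀ t, HasDerivAt b
      (-a t / 2 + 3 * C / 8 * (a t ^ 2 + b t ^ 2) * a t - A / 2 - B / 2 * Real.cos γ) t) :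
    ∀ t, (deriv (fun s => (a s ^ 2 + b s ^ 2) / 2) t) ^ 2 +
        (1 / 2 * ((B * Real.sin γ - J) * b t + a t * (A + B * Real.cos γ))) ^ 2 =
      (a t ^ 2 + b t ^ 2) / 2 / 2 *
        ((A + B * Real.cos γ) ^ 2 + (J - B * Real.sin γ) ^ 2) := by
  intro t
  have h : HasDerivAt (fun s => (a s ^ 2 + b s ^ 2) / 2)
      ((a t * (b t / 2 - 3 * C / 8 * (a t ^ 2 + b t ^ 2) * b t - J / 2 + B / 2 * Real.sin γ)
        + b t * (-a t / 2 + 3 * C / 8 * (a t ^ 2 + b t ^ 2) * a t - A / 2 - B / 2 * Real.cos γ))) t := by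
    have := ((((ha t).pow 2).add ((hb t).pow 2)).div_const 2 :
      HasDerivAt (fun s => (a s ^ 2 + b s ^ 2) / 2) _ t)
    refine this.congr_deriv ?_
    ring
  rw [h.deriv]
  ring
end

section
/- Let a, b : ℝ → ℝ solve the system a'(t) = b(t)/2 − (3C/8)(a(t)² + b(t)²)b(t) − J/2 + (B/2)sin γ, b'(t) = −a(t)/2 + (3C/8)(a(t)² + b(t)²)a(t) − A/2 − (B/2)cos γ, let ρ(t) = (a(t)² + b(t)²)/2, and let h be the (constant) value of the Hamiltonian h(a,b) = (a² + b²)/4 − (3C/32)(a² + b²)² + (b/2)(B sin γ − J) + (a/2)(A + B cos γ) along this solution. Then for every t, (ρ'(t))² = (√(ρ(t)D/2) − (h − ρ(t)/2 + (3C/8)ρ(t)²)) · (√(ρ(t)D/2) + (h − ρ(t)/2 + (3C/8)ρ(t)²)), where D = (A + B cos γ)² + (J − B sin γ)². -/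
/-- Along a solution of the slow-flow system, with `ρ = (a² + b²)/2` and `h` the
constant value of the Hamiltonian, one has
`(ρ')² = (√(ρD/2) − (h − ρ/2 + (3C/8)ρ²))·(√(ρD/2) + (h − ρ/2 + (3C/8)ρ²))`,
where `D = (A + B cos γ)² + (J − B sin γ)²`. -/
theorem action_derivative_factored (A B C J γ h : ℝ) (a b : ℝ → ℝ)
    (ha : ∀ t, HasDerivAt a
      (b t / 2 - 3 * C / 8 * (a t ^ 2 + b t ^ 2) * b t - J / 2 + B / 2 * Real.sin γ) t)
    (hb : ∀ t, HasDerivAt b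
      (-a t / 2 + 3 * C / 8 * (a t ^ 2 + b t ^ 2) * a t - A / 2 - B / 2 * Real.cos γ) t)
    (hh : ∀ t, (a t ^ 2 + b t ^ 2) / 4 - 3 * C / 32 * (a t ^ 2 + b t ^ 2) ^ 2 +
      b t / 2 * (B * Real.sin γ - J) + a t / 2 * (A + B * Real.cos γ) = h) :
    ∀ t,
      let ρ := (a t ^ 2 + b t ^ 2) / 2
      let D := (A + B * Real.cos γ) ^ 2 + (J - B * Real.sin γ) ^ 2
      (deriv (fun s => (a s ^ 2 + b s ^ 2) / 2) t) ^ 2 =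
        (Real.sqrt (ρ * D / 2) - (h - ρ / 2 + 3 * C / 8 * ρ ^ 2)) *
          (Real.sqrt (ρ * D / 2) + (h - ρ / 2 + 3 * C / 8 * ρ ^ 2)) := by
  intro t
  set ρ := (a t ^ 2 + b t ^ 2) / 2 with hρ
  set D := (A + B * Real.cos γ) ^ 2 + (J - B * Real.sin γ) ^ 2 with hD
  intro _ _
  have hd : HasDerivAt (fun s => (a s ^ 2 + b s ^ 2) / 2)
      ((2 * a t ^ 1 * (b t / 2 - 3 * C / 8 * (a t ^ 2 + b t ^ 2) * b t - J / 2 +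
          B / 2 * Real.sin γ) +
        2 * b t ^ 1 * (-a t / 2 + 3 * C / 8 * (a t ^ 2 + b t ^ 2) * a t - A / 2 -
          B / 2 * Real.cos γ)) / 2) t :=
    (((ha t).pow 2).add ((hb t).pow 2)).div_const 2
  rw [hd.deriv]
  have hnn : 0 ≤ ρ * D / 2 := by positivity
  have hs : Real.sqrt (ρ * D / 2) * Real.sqrt (ρ * D / 2) = ρ * D / 2 :=
    Real.mul_self_sqrt hnn
  have ht := hh t
  have key : (Real.sqrt (ρ * D / 2) - (h - ρ / 2 + 3 * C / 8 * ρ ^ 2)) *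
      (Real.sqrt (ρ * D / 2) + (h - ρ / 2 + 3 * C / 8 * ρ ^ 2)) =
      ρ * D / 2 - (h - ρ / 2 + 3 * C / 8 * ρ ^ 2) ^ 2 := by
    linear_combination hs
  rw [key, hρ, hD, ← ht]
  ring
end

section
/- Let C > 0, D > 0, ρ* > 0 be real numbers with −4 + 3C(2√(2Dρ*) + ρ*(4 − 3Cρ*)) > 0, and set Q(t) = t·√(−4 + 3C(2√(2Dρ*) + ρ*(4 − 3Cρ*))). Define ρ(t) = [ (128 e^{Q(t)/2} + 27C³√(2Dρ*))ρ* − 16 e^{Q(t)/4}(3C(6ρ* − 3C(ρ*)² + 4√(2Dρ*)) − 8) ] / [ 128 e^{Q(t)/2} + 27C³√(2Dρ*) − 48 e^{Q(t)/4}(3Cρ* − 2) ]. Then ρ(t) → ρ* as t → +∞ and ρ(t) → ρ* as t → −∞. -/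
open Filter Real

/-- The explicit homoclinic solution `ρ(t)` tends to the saddle action value `ρ*`
as `t → +∞` and as `t → −∞`. -/
theorem homoclinic_solution_limits (C D ρs : ℝ) (hC : 0 < C) (hD : 0 < D)
    (hρs : 0 < ρs)
    (hQ : 0 < -4 + 3 * C * (2 * Real.sqrt (2 * D * ρs) + ρs * (4 - 3 * C * ρs))) :
    let Q : ℝ → ℝ := fun t =>
      t * Real.sqrt (-4 + 3 * C * (2 * Real.sqrt (2 * D * ρs) + ρs * (4 - 3 * C * ρs)))
    let ρ : ℝ → ℝ := fun t =>
      ((128 * Real.exp (Q t / 2) + 27 * C ^ 3 * Real.sqrt (2 * D * ρs)) * ρs -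
          16 * Real.exp (Q t / 4) *
            (3 * C * (6 * ρs - 3 * C * ρs ^ 2 + 4 * Real.sqrt (2 * D * ρs)) - 8)) /
        (128 * Real.exp (Q t / 2) + 27 * C ^ 3 * Real.sqrt (2 * D * ρs) -
          48 * Real.exp (Q t / 4) * (3 * C * ρs - 2))
    Filter.Tendsto ρ Filter.atTop (nhds ρs) ∧
      Filter.Tendsto ρ Filter.atBot (nhds ρs) := by
  intro Q ρ
  set s : ℝ := Real.sqrt (-4 + 3 * C * (2 * Real.sqrt (2 * D * ρs) + ρs * (4 - 3 * C * ρs)))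
    with hs
  have hs0 : 0 < s := Real.sqrt_pos.mpr hQ
  set K : ℝ := 27 * C ^ 3 * Real.sqrt (2 * D * ρs) with hKdef
  have hK0 : 0 < K :=
    mul_pos (by positivity) (Real.sqrt_pos.mpr (by positivity))
  set A : ℝ := 3 * C * (6 * ρs - 3 * C * ρs ^ 2 + 4 * Real.sqrt (2 * D * ρs)) - 8 with hA
  set B : ℝ := 3 * C * ρs - 2 with hB
  have hsq : ∀ t : ℝ, Real.exp (Q t / 2) = (Real.exp (Q t / 4)) ^ 2 := by
    intro t
    rw [sq, ← Real.exp_add]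
    congr 1; ring
  have hρeq : ∀ t : ℝ, ρ t =
      ((128 * (Real.exp (Q t / 4)) ^ 2 + K) * ρs - 16 * Real.exp (Q t / 4) * A) /
        (128 * (Real.exp (Q t / 4)) ^ 2 + K - 48 * Real.exp (Q t / 4) * B) := by
    intro t
    simp only [ρ, hsq t]
    rfl
  constructor
  · -- atTop : rewrite using v = exp (-(Q t)/4), which tends to 0
    have hρeq2 : ∀ t : ℝ, ρ t =
        ((128 + K * (Real.exp (-(Q t) / 4)) ^ 2) * ρs - 16 * Real.exp (-(Q t) / 4) * A) /
          (128 + K * (Real.exp (-(Q t) / 4)) ^ 2 - 48 * Real.exp (-(Q t) / 4) * B) := by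
      intro t
      rw [hρeq t]
      set x : ℝ := Real.exp (Q t / 4) with hxdef
      have hx0 : 0 < x := Real.exp_pos _
      have hinv : Real.exp (-(Q t) / 4) = x⁻¹ := by
        rw [← Real.exp_neg]; congr 1; ring
      rw [hinv]
      have hc : (x⁻¹) ^ 2 ≠ 0 := by positivity
      rw [← mul_div_mul_right _ _ hc]
      congr 1 <;> field_simp <;> ring
    have hv : Tendsto (fun t : ℝ => Real.exp (-(Q t) / 4)) atTop (nhds 0) := by
      apply Real.tendsto_exp_atBot.comp
      have : Tendsto (fun t : ℝ => t * (-(s / 4))) atTop atBot :=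
        Tendsto.atTop_mul_const_of_neg (by linarith) tendsto_id
      refine this.congr' (Eventually.of_forall fun t => ?_)
      simp only [Q]; ring
    have hnum : Tendsto (fun t : ℝ =>
        (128 + K * (Real.exp (-(Q t) / 4)) ^ 2) * ρs - 16 * Real.exp (-(Q t) / 4) * A)
        atTop (nhds (128 * ρs)) := by
      have hc : Continuous fun v : ℝ => (128 + K * v ^ 2) * ρs - 16 * v * A := by fun_prop
      have := (hc.tendsto 0).comp hv
      simp only [Function.comp_def] at this
      convert this using 2
      norm_num
    have hden : Tendsto (fun t : ℝ =>
        128 + K * (Real.exp (-(Q t) / 4)) ^ 2 - 48 * Real.exp (-(Q t) / 4) * B)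
        atTop (nhds 128) := by
      have hc : Continuous fun v : ℝ => 128 + K * v ^ 2 - 48 * v * B := by fun_prop
      have := (hc.tendsto 0).comp hv
      simp only [Function.comp_def] at this
      convert this using 2
      norm_num
    have h := hnum.div hden (by norm_num)
    have h128 : (128 : ℝ) * ρs / 128 = ρs := by ring
    rw [h128] at h
    exact h.congr' (Eventually.of_forall fun t => (hρeq2 t).symm)
  · -- atBot : exp (Q t / 4) tends to 0
    have hv : Tendsto (fun t : ℝ => Real.exp (Q t / 4)) atBot (nhds 0) := by
      apply Real.tendsto_exp_atBot.comp
      have : Tendsto (fun t : ℝ => t * (s / 4)) atBot atBot :=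
        Tendsto.atBot_mul_const (by linarith) tendsto_id
      refine this.congr' (Eventually.of_forall fun t => ?_)
      simp only [Q]; ring
    have hnum : Tendsto (fun t : ℝ =>
        (128 * (Real.exp (Q t / 4)) ^ 2 + K) * ρs - 16 * Real.exp (Q t / 4) * A)
        atBot (nhds (K * ρs)) := by
      have hc : Continuous fun v : ℝ => (128 * v ^ 2 + K) * ρs - 16 * v * A := by fun_prop
      have := (hc.tendsto 0).comp hv
      simp only [Function.comp_def] at this
      convert this using 2
      norm_num
    have hden : Tendsto (fun t : ℝ =>
        128 * (Real.exp (Q t / 4)) ^ 2 + K - 48 * Real.exp (Q t / 4) * B)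
        atBot (nhds K) := by
      have hc : Continuous fun v : ℝ => 128 * v ^ 2 + K - 48 * v * B := by fun_prop
      have := (hc.tendsto 0).comp hv
      simp only [Function.comp_def] at this
      convert this using 2
      norm_num
    have h := hnum.div hden hK0.ne'
    have hKρ : K * ρs / K = ρs := by field_simp
    rw [hKρ] at h
    exact h.congr' (Eventually.of_forall fun t => (hρeq t).symm)
end
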